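/- Let ω > 0 and let a, b ∈ ℝ with (a, b) ≠ (0, 0); set f(t) := a sin(ωt) + b cos(ωt). Let (t_n) be a sequence of real numbers such that for every ε > 0 there exists N with sup_{t ∈ ℝ} |f(t + t_m − t_n) − f(t)| < ε for all m, n ≥ N. Then the sequence (exp(i ω t_n)) converges in ℂ; equivalently, there exists θ ∈ ℝ such that the distance from ω t_n − θ to 2πℤ tends to 0, i.e. the phases t_n converge modulo the period 2π/ω. -/

import Mathlib

open Filter

lemma sin_cos_re (a b x : ℝ) :
    a * Real.sin x + b * Real.cos x = (((b : ℂ) - a * Complex.I) * Complex.exp (x * Complex.I)).re := by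
  rw [Complex.exp_mul_I]
  simp [Complex.mul_re, Complex.sub_re, Complex.sub_im, Complex.cos_ofReal_re,
    Complex.sin_ofReal_im, Complex.cos_ofReal_im, Complex.sin_ofReal_re]
  ring

lemma key (ω a b τ ε : ℝ) (hω : ω ≠ 0) (hε : 0 < ε)
    (h : ∀ s : ℝ, |a * Real.sin (ω * (s + τ)) + b * Real.cos (ω * (s + τ)) -
        (a * Real.sin (ω * s) + b * Real.cos (ω * s))| < ε) :
    ‖(b : ℂ) - a * Complex.I‖ * ‖Complex.exp ((ω * τ : ℝ) * Complex.I) - 1‖ < ε := by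
  set c : ℂ := (b : ℂ) - a * Complex.I with hc
  set w : ℂ := Complex.exp ((ω * τ : ℝ) * Complex.I) - 1 with hw
  set z : ℂ := c * w with hz
  rcases eq_or_ne z 0 with h0 | h0
  · rw [← norm_mul, ← hz, h0]; simpa using hε
  · set s : ℝ := (-Complex.arg z) / ω with hs
    have hωs : (ω * s : ℝ) = -Complex.arg z := by rw [hs]; field_simp
    have hdiff : a * Real.sin (ω * (s + τ)) + b * Real.cos (ω * (s + τ)) -
        (a * Real.sin (ω * s) + b * Real.cos (ω * s)) = ‖z‖ := by
      rw [sin_cos_re a b (ω * (s + τ)), sin_cos_re a b (ω * s), ← Complex.sub_re]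
      have : (((ω * (s + τ) : ℝ)) : ℂ) = ((ω * s : ℝ) : ℂ) + ((ω * τ : ℝ) : ℂ) := by
        push_cast; ring
      rw [this, add_mul, Complex.exp_add]
      have e1 : c * (Complex.exp ((ω * s : ℝ) * Complex.I) * Complex.exp ((ω * τ : ℝ) * Complex.I)) -
          c * Complex.exp ((ω * s : ℝ) * Complex.I) = z * Complex.exp ((ω * s : ℝ) * Complex.I) := by
        rw [hz, hw]; ring
      rw [e1, hωs]
      have := Complex.norm_mul_exp_arg_mul_I z
      have e2 : z * Complex.exp ((-Complex.arg z : ℝ) * Complex.I) = (‖z‖ : ℂ) := by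
        nth_rw 1 [← this]
        push_cast
        rw [neg_mul, Complex.exp_neg]
        field_simp [Complex.exp_ne_zero]
      rw [e2, Complex.ofReal_re]
    have := h s
    rw [hdiff] at this
    rw [← norm_mul, ← hz]
    calc ‖z‖ ≤ |‖z‖| := le_abs_self _
    _ < ε := this

theorem statement_16 (ω : ℝ) (hω : 0 < ω) (a b : ℝ) (hab : (a, b) ≠ (0, 0))
    (t : ℕ → ℝ)
    (h : ∀ ε : ℝ, 0 < ε → ∃ N : ℕ, ∀ m n : ℕ, N ≤ m → N ≤ n → ∀ s : ℝ,
      |a * Real.sin (ω * (s + t m - t n)) + b * Real.cos (ω * (s + t m - t n)) -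
        (a * Real.sin (ω * s) + b * Real.cos (ω * s))| < ε) :
    ∃ z : ℂ, Tendsto (fun n => Complex.exp (Complex.I * ((ω * t n : ℝ) : ℂ)))
      atTop (nhds z) := by
  set c : ℂ := (b : ℂ) - a * Complex.I with hc
  have hcne : c ≠ 0 := by
    intro hc0
    apply hab
    have hre := congrArg Complex.re hc0
    have him := congrArg Complex.im hc0
    simp [hc, Complex.sub_re, Complex.sub_im] at hre him
    simp [hre, him]
  have hcpos : 0 < ‖c‖ := norm_pos_iff.mpr hcne
  have hcauchy : CauchySeq (fun n => Complex.exp (Complex.I * ((ω * t n : ℝ) : ℂ))) := by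
    rw [Metric.cauchySeq_iff]
    intro ε hε
    obtain ⟨N, hN⟩ := h (ε * ‖c‖) (by positivity)
    refine ⟨N, fun m hm n hn => ?_⟩
    have hk := key ω a b (t m - t n) (ε * ‖c‖) (ne_of_gt hω) (by positivity)
      (fun s => by
        have := hN m n hm hn s
        convert this using 4 <;> ring)
    have habw : ‖Complex.exp ((ω * (t m - t n) : ℝ) * Complex.I) - 1‖ < ε := by
      by_contra hcon
      push_neg at hcon
      nlinarith [mul_le_mul_of_nonneg_right hcon (le_of_lt hcpos)]
    rw [Complex.dist_eq]
    have hsplit : Complex.exp (Complex.I * ((ω * t m : ℝ) : ℂ)) - Complex.exp (Complex.I * ((ω * t n : ℝ) : ℂ))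
        = Complex.exp (Complex.I * ((ω * t n : ℝ) : ℂ)) * (Complex.exp ((ω * (t m - t n) : ℝ) * Complex.I) - 1) := by
      rw [mul_sub, mul_one, ← Complex.exp_add]
      congr 1
      push_cast
      ring
    rw [hsplit, norm_mul]
    have : ‖Complex.exp (Complex.I * ((ω * t n : ℝ) : ℂ))‖ = 1 := by
      rw [mul_comm]
      exact Complex.norm_exp_ofReal_mul_I _
    rw [this, one_mul]
    exact habw
  exact cauchySeq_tendsto_of_complete hcauchy
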